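/- Let X be a standard Brownian motion, G standard Gaussian, f : ℝ → ℝ with bounded derivative, and P a polynomial with E[G·P(G)] = 0. Set r_t^{(1,m)} = 2^{-m/2}·(1/2)·∑_{j=1}^{⌊2^{m/2}t⌋} φ(j) f'(X_{(j−1)2^{-m/2}})·(X_j^{(m)} − X_{j−1}^{(m)})·(P(X_j^{(m)} − X_{j−1}^{(m)}) − E[P(G)]), where X_t^{(m)} = 2^{m/4} X_{t 2^{-m/2}} and φ is any function bounded by a constant. Then E|r_t^{(1,m)}|² = O(2^{-m/2}) as m → ∞. -/

import Mathlib

open MeasureTheory ProbabilityTheory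

def IsBrownianMotion {Ω : Type*} [MeasureSpace Ω] (X : ℝ → Ω → ℝ) : Prop :=
  (∀ᵐ ω, X 0 ω = 0) ∧
  (∀ s t : ℝ, 0 ≤ s → s ≤ t →
    Measure.map (fun ω => X t ω - X s ω) (ℙ : Measure Ω) = gaussianReal 0 (t - s).toNNReal) ∧
  (∀ (n : ℕ) (u : ℕ → ℝ), Monotone u → 0 ≤ u 0 →
    iIndepFun
      (fun i : Fin n => fun ω => X (u (i + 1)) ω - X (u i) ω) (ℙ : Measure Ω))

section Helpers
open Real
open MeasureTheory ProbabilityTheory Real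

lemma integrable_pow_mul_exp_half (i : ℕ) :
    Integrable (fun x : ℝ => x ^ i * Real.exp (-(1/2) * x ^ 2)) := by
  have hg : Integrable (fun x : ℝ => (1 + x ^ (2 * i)) * Real.exp (-(1/2) * x ^ 2)) := by
    simp only [add_mul, one_mul]
    refine (integrable_exp_neg_mul_sq (by norm_num)).add ?_
    have h := integrable_rpow_mul_exp_neg_mul_sq (b := 1/2) (by norm_num) (s := ((2 * i : ℕ) : ℝ))
        (by exact_mod_cast neg_one_lt_zero.trans_le (Nat.cast_nonneg (2*i)))
    simp only [Real.rpow_natCast] at h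
    exact h
  refine hg.mono' ?_ ?_
  · exact ((continuous_pow i).mul (continuous_exp.comp (by continuity))).aestronglyMeasurable
  · refine Filter.Eventually.of_forall fun x => ?_
    rw [norm_mul, Real.norm_eq_abs, Real.norm_eq_abs, abs_exp, abs_pow]
    have h2 : x ^ (2 * i) = (|x| ^ i) ^ 2 := by
      rw [← abs_pow, sq_abs, ← pow_mul, mul_comm i 2]
    refine mul_le_mul_of_nonneg_right ?_ (exp_pos _).le
    rw [h2]
    nlinarith [abs_nonneg x, pow_nonneg (abs_nonneg x) i]

lemma integrable_poly_gaussian (Q : Polynomial ℝ) :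
    Integrable (fun x => Q.eval x) (gaussianReal 0 1) := by
  rw [gaussianReal_of_var_ne_zero 0 one_ne_zero]
  rw [integrable_withDensity_iff (measurable_gaussianPDF 0 1)
    (Filter.Eventually.of_forall fun x => ENNReal.ofReal_lt_top)]
  have hpdf : ∀ x, (gaussianPDF 0 1 x).toReal = gaussianPDFReal 0 1 x := fun x =>
    ENNReal.toReal_ofReal (gaussianPDFReal_nonneg 0 1 x)
  simp only [hpdf]
  have hpr : ∀ x, gaussianPDFReal 0 1 x = (Real.sqrt (2 * π))⁻¹ * Real.exp (-(1/2) * x ^ 2) := by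
    intro x
    unfold gaussianPDFReal
    norm_num
    left; ring_nf
  simp only [hpr]
  have hint : Integrable (fun x => Q.eval x * Real.exp (-(1/2) * x ^ 2)) := by
    have hQ : ∀ x : ℝ, Q.eval x = ∑ i ∈ Finset.range (Q.natDegree + 1), Q.coeff i * x ^ i :=
      fun x => Q.eval_eq_sum_range x
    simp only [hQ, Finset.sum_mul]
    apply integrable_finset_sum
    intro i _
    simpa [mul_assoc] using (integrable_pow_mul_exp_half i).const_mul (Q.coeff i)
  simpa [mul_comm, mul_assoc, mul_left_comm] using hint.mul_const (Real.sqrt (2 * π))⁻¹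

lemma gauss_mean_zero : ∫ x, x ∂(gaussianReal 0 1) = 0 := by
  have hmap : (gaussianReal 0 1).map (fun x => (-1 : ℝ) * x) = gaussianReal 0 1 := by
    rw [gaussianReal_map_const_mul (-1)]
    congr 1
    · norm_num
    · ext; norm_num
  have h2 := integral_map (μ := gaussianReal 0 1) (φ := fun x => (-1:ℝ)*x)
    (f := fun y : ℝ => y) (by fun_prop) measurable_id.aestronglyMeasurable
  rw [hmap] at h2
  simp only [neg_one_mul] at h2
  rw [integral_neg] at h2
  linarith

lemma iIndepFun_ae_eq {Ω ι : Type*} {_ : MeasurableSpace Ω} {μ : Measure Ω}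
    [IsProbabilityMeasure μ] {f g : ι → Ω → ℝ}
    (h : iIndepFun f μ) (hfg : ∀ i, f i =ᵐ[μ] g i) :
    iIndepFun g μ := by
  rw [iIndepFun_iff_measure_inter_preimage_eq_mul] at h ⊢
  intro S sets hsets
  have h1 := h S hsets
  have hae : ∀ᵐ ω ∂μ, ∀ i ∈ S, f i ω = g i ω := by
    rw [Filter.eventually_all_finset]
    exact fun i _ => hfg i
  have hiff : (⋂ i ∈ S, g i ⁻¹' sets i : Set Ω) =ᵐ[μ] (⋂ i ∈ S, f i ⁻¹' sets i : Set Ω) := by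
    filter_upwards [hae] with ω hω
    have : (ω ∈ ⋂ i ∈ S, g i ⁻¹' sets i) ↔ (ω ∈ ⋂ i ∈ S, f i ⁻¹' sets i) := by
      simp only [Set.mem_iInter, Set.mem_preimage]
      exact ⟨fun H i hi => by rw [hω i hi]; exact H i hi,
             fun H i hi => by rw [← hω i hi]; exact H i hi⟩
    exact eq_iff_iff.2 this
  rw [measure_congr hiff, h1]
  refine Finset.prod_congr rfl fun i _ => ?_
  have : (f i ⁻¹' sets i : Set Ω) =ᵐ[μ] (g i ⁻¹' sets i : Set Ω) := by
    filter_upwards [hfg i] with ω hω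
    exact eq_iff_iff.2 (by change f i ω ∈ sets i ↔ g i ω ∈ sets i; rw [hω])
  exact measure_congr this

lemma key_orthogonality {Ω : Type*} [MeasureSpace Ω] [IsProbabilityMeasure (ℙ : Measure Ω)]
    {N : ℕ} (Y : Fin N → Ω → ℝ) (hYm : ∀ i, Measurable (Y i))
    (hYindep : iIndepFun Y ℙ)
    (hYlaw : ∀ i, Measure.map (Y i) ℙ = gaussianReal 0 1)
    (g : ℝ → ℝ) (hg : Measurable g)
    (hg1 : Integrable g (gaussianReal 0 1))
    (hg2 : Integrable (fun x => g x ^ 2) (gaussianReal 0 1))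
    (hg0 : ∫ x, g x ∂(gaussianReal 0 1) = 0)
    (A : Fin N → Ω → ℝ) (B : ℝ) (hB : 0 ≤ B)
    (hA : ∀ j ω, |A j ω| ≤ B)
    (hAF : ∀ j : Fin N, ∃ F : (Fin N → ℝ) → ℝ, Measurable F ∧
        ∀ ω, A j ω = F (fun l => if (l : ℕ) < (j : ℕ) then Y l ω else 0)) :
    ∫ ω, (∑ j, A j ω * g (Y j ω)) ^ 2 ∂ℙ
      ≤ (N : ℝ) * (B ^ 2 * ∫ x, g x ^ 2 ∂(gaussianReal 0 1)) := by
  -- measurability of A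
  have hAm : ∀ j, Measurable (A j) := by
    intro j
    obtain ⟨F, hFm, hF⟩ := hAF j
    have : A j = fun ω => F (fun l => if (l : ℕ) < (j : ℕ) then Y l ω else 0) := funext hF
    rw [this]
    exact hFm.comp (measurable_pi_lambda _ fun l => by
      split
      · exact hYm l
      · exact measurable_const)
  have hGm : ∀ j, Measurable (fun ω => g (Y j ω)) := fun j => hg.comp (hYm j)
  -- integrability of g ∘ Y j and its square
  have hGint : ∀ j, Integrable (fun ω => g (Y j ω)) ℙ := by
    intro j
    have h := integrable_map_measure (f := Y j) (g := g) (μ := (ℙ : Measure Ω))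
      hg.aestronglyMeasurable (hYm j).aemeasurable
    rw [hYlaw j] at h
    exact h.1 hg1
  have hG2int : ∀ j, Integrable (fun ω => g (Y j ω) ^ 2) ℙ := by
    intro j
    have h := integrable_map_measure (f := Y j) (g := fun x => g x ^ 2) (μ := (ℙ : Measure Ω))
      (hg.pow_const 2).aestronglyMeasurable (hYm j).aemeasurable
    rw [hYlaw j] at h
    exact h.1 hg2
  have hGmean : ∀ j, ∫ ω, g (Y j ω) ∂ℙ = 0 := by
    intro j
    have h := integral_map (φ := Y j) (f := g) (μ := (ℙ : Measure Ω)) (hYm j).aemeasurable hg.aestronglyMeasurable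
    rw [hYlaw j] at h
    rw [← h]
    exact hg0
  have hG2mean : ∀ j, ∫ ω, g (Y j ω) ^ 2 ∂ℙ = ∫ x, g x ^ 2 ∂(gaussianReal 0 1) := by
    intro j
    have h := integral_map (φ := Y j) (f := fun x => g x ^ 2) (μ := (ℙ : Measure Ω)) (hYm j).aemeasurable
      (hg.pow_const 2).aestronglyMeasurable
    rw [hYlaw j] at h
    rw [← h]
  -- integrability of products
  have hSdiag : ∀ j : Fin N, Integrable (fun ω => (A j ω * g (Y j ω)) * (A j ω * g (Y j ω))) ℙ := by
    intro j
    refine ((hG2int j).const_mul (B ^ 2)).mono'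
      (((hAm j).mul (hGm j)).mul ((hAm j).mul (hGm j))).aestronglyMeasurable ?_
    refine Filter.Eventually.of_forall fun ω => ?_
    have h1 : |A j ω| ^ 2 ≤ B ^ 2 := by
      have := hA j ω
      nlinarith [abs_nonneg (A j ω)]
    calc ‖A j ω * g (Y j ω) * (A j ω * g (Y j ω))‖
        = |A j ω| ^ 2 * g (Y j ω) ^ 2 := by
          rw [Real.norm_eq_abs, abs_mul, abs_mul, ← sq_abs (g (Y j ω))]
          ring
      _ ≤ B ^ 2 * g (Y j ω) ^ 2 := mul_le_mul_of_nonneg_right h1 (sq_nonneg _)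
  have hSoff : ∀ j k : Fin N, j ≠ k →
      Integrable (fun ω => (A j ω * g (Y j ω)) * (A k ω * g (Y k ω))) ℙ := by
    intro j k hjk
    have hind : IndepFun (fun ω => g (Y j ω)) (fun ω => g (Y k ω)) ℙ :=
      (hYindep.indepFun hjk).comp hg hg
    have hprod : Integrable (fun ω => g (Y j ω) * g (Y k ω)) ℙ :=
      hind.integrable_mul (hGint j) (hGint k)
    refine ((hprod.abs).const_mul (B ^ 2)).mono'
      (((hAm j).mul (hGm j)).mul ((hAm k).mul (hGm k))).aestronglyMeasurable ?_
    refine Filter.Eventually.of_forall fun ω => ?_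
    calc ‖A j ω * g (Y j ω) * (A k ω * g (Y k ω))‖
        = (|A j ω| * |A k ω|) * |g (Y j ω) * g (Y k ω)| := by
          rw [Real.norm_eq_abs]
          rw [abs_mul, abs_mul, abs_mul, abs_mul]
          ring
      _ ≤ (B * B) * |g (Y j ω) * g (Y k ω)| := by
          refine mul_le_mul_of_nonneg_right ?_ (abs_nonneg _)
          exact mul_le_mul (hA j ω) (hA k ω) (abs_nonneg _) hB
      _ = B ^ 2 * |g (Y j ω) * g (Y k ω)| := by ring
  -- cross terms vanish
  have hcross : ∀ j k : Fin N, (j : ℕ) < (k : ℕ) →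
      ∫ ω, (A j ω * g (Y j ω)) * (A k ω * g (Y k ω)) ∂ℙ = 0 := by
    intro j k hjk
    obtain ⟨Fj, hFjm, hFj⟩ := hAF j
    obtain ⟨Fk, hFkm, hFk⟩ := hAF k
    classical
    set T : Finset (Fin N) := Finset.univ.filter (fun l => (l : ℕ) < (k : ℕ)) with hT
    have hkT : k ∉ T := by simp [hT]
    have hdisj : Disjoint T ({k} : Finset (Fin N)) := by
      simp [Finset.disjoint_singleton_right, hkT]
    have hjT : j ∈ T := by
      simp only [hT, Finset.mem_filter, Finset.mem_univ, true_and]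
      exact hjk
    have hind0 := hYindep.indepFun_finset T {k} hdisj hYm
    set ext : (T → ℝ) → (Fin N → ℝ) :=
      fun v l => if hl : l ∈ T then v ⟨l, hl⟩ else 0 with hext
    have hextm : Measurable ext := by
      apply measurable_pi_lambda
      intro l
      by_cases hl : l ∈ T
      · simp only [hext, hl, dif_pos]
        exact measurable_pi_apply _
      · simp only [hext, hl, dif_neg, not_false_iff]
        exact measurable_const
    set ΦL : (T → ℝ) → ℝ := fun v =>
      Fj (fun l => if (l : ℕ) < (j : ℕ) then ext v l else 0) * g (ext v j) *
        Fk (fun l => if (l : ℕ) < (k : ℕ) then ext v l else 0) with hΦL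
    have hΦLm : Measurable ΦL := by
      apply Measurable.mul
      apply Measurable.mul
      · exact hFjm.comp ((measurable_pi_lambda _ fun l => by
          split
          · exact (measurable_pi_apply l).comp hextm
          · exact measurable_const))
      · exact hg.comp ((measurable_pi_apply j).comp hextm)
      · exact hFkm.comp ((measurable_pi_lambda _ fun l => by
          split
          · exact (measurable_pi_apply l).comp hextm
          · exact measurable_const))
    set ΦR : (({k} : Finset (Fin N)) → ℝ) → ℝ :=
      fun v => g (v ⟨k, Finset.mem_singleton_self k⟩) with hΦR
    have hΦRm : Measurable ΦR := hg.comp (measurable_pi_apply _)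
    have hcomp := hind0.comp hΦLm hΦRm
    have hextY : ∀ (ω : Ω) (l : Fin N),
        ext (fun i : T => Y i ω) l = if l ∈ T then Y l ω else 0 := by
      intro ω l
      by_cases hl : l ∈ T <;> simp [hext, hl]
    have hLeq : (ΦL ∘ fun ω (l : T) => Y l ω)
        = fun ω => A j ω * g (Y j ω) * A k ω := by
      funext ω
      simp only [Function.comp_apply, hΦL]
      have h1 : (fun l : Fin N => if (l : ℕ) < (j : ℕ) then ext (fun i : T => Y i ω) l else 0)
          = fun l : Fin N => if (l : ℕ) < (j : ℕ) then Y l ω else 0 := by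
        funext l
        by_cases h : (l : ℕ) < (j : ℕ)
        · have hlT : l ∈ T := by
            simp only [hT, Finset.mem_filter, Finset.mem_univ, true_and]
            exact h.trans hjk
          simp [h, hextY, hlT]
        · simp [h]
      have h2 : ext (fun i : T => Y i ω) j = Y j ω := by simp [hextY, hjT]
      have h3 : (fun l : Fin N => if (l : ℕ) < (k : ℕ) then ext (fun i : T => Y i ω) l else 0)
          = fun l : Fin N => if (l : ℕ) < (k : ℕ) then Y l ω else 0 := by
        funext l
        by_cases h : (l : ℕ) < (k : ℕ)
        · have hlT : l ∈ T := by
            simp only [hT, Finset.mem_filter, Finset.mem_univ, true_and]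
            exact h
          simp [h, hextY, hlT]
        · simp [h]
      rw [h1, h2, h3, ← hFj ω, ← hFk ω]
    have hReq : (ΦR ∘ fun ω (l : ({k} : Finset (Fin N))) => Y l ω)
        = fun ω => g (Y k ω) := by
      funext ω
      simp [hΦR]
    rw [hLeq, hReq] at hcomp
    have hL : Integrable (fun ω => A j ω * g (Y j ω) * A k ω) ℙ := by
      refine (((hGint j).abs).const_mul (B ^ 2)).mono'
        (((hAm j).mul (hGm j)).mul (hAm k)).aestronglyMeasurable ?_
      refine Filter.Eventually.of_forall fun ω => ?_
      calc ‖A j ω * g (Y j ω) * A k ω‖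
          = (|A j ω| * |A k ω|) * |g (Y j ω)| := by
            rw [Real.norm_eq_abs, abs_mul, abs_mul]; ring
        _ ≤ (B * B) * |g (Y j ω)| :=
            mul_le_mul_of_nonneg_right
              (mul_le_mul (hA j ω) (hA k ω) (abs_nonneg _) hB) (abs_nonneg _)
        _ = B ^ 2 * |g (Y j ω)| := by ring
    have heq : (fun ω => (A j ω * g (Y j ω)) * (A k ω * g (Y k ω)))
        = fun ω => (A j ω * g (Y j ω) * A k ω) * g (Y k ω) := by
      funext ω; ring
    rw [heq]
    have hmul := IndepFun.integral_fun_mul_eq_mul_integral hcomp hL.aestronglyMeasurable (hGint k).aestronglyMeasurable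
    calc ∫ ω, (A j ω * g (Y j ω) * A k ω) * g (Y k ω) ∂ℙ
        = (∫ ω, A j ω * g (Y j ω) * A k ω ∂ℙ) * ∫ ω, g (Y k ω) ∂ℙ := hmul
      _ = 0 := by rw [hGmean k, mul_zero]
  -- assemble
  classical
  have hSint : ∀ j k : Fin N,
      Integrable (fun ω => (A j ω * g (Y j ω)) * (A k ω * g (Y k ω))) ℙ := by
    intro j k
    by_cases h : j = k
    · subst h; exact hSdiag j
    · exact hSoff j k h
  have hexp : ∫ ω, (∑ j, A j ω * g (Y j ω)) ^ 2 ∂ℙ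
      = ∑ j, ∑ k, ∫ ω, (A j ω * g (Y j ω)) * (A k ω * g (Y k ω)) ∂ℙ := by
    have h1 : (fun ω => (∑ j, A j ω * g (Y j ω)) ^ 2)
        = fun ω => ∑ j, ∑ k, (A j ω * g (Y j ω)) * (A k ω * g (Y k ω)) := by
      funext ω
      rw [sq, Finset.sum_mul_sum]
    rw [h1, integral_finset_sum _ (fun j _ => integrable_finset_sum _ (fun k _ => hSint j k))]
    exact Finset.sum_congr rfl fun j _ => integral_finset_sum _ (fun k _ => hSint j k)
  have hrow : ∀ j : Fin N,
      ∑ k, ∫ ω, (A j ω * g (Y j ω)) * (A k ω * g (Y k ω)) ∂ℙ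
        = ∫ ω, (A j ω * g (Y j ω)) * (A j ω * g (Y j ω)) ∂ℙ := by
    intro j
    refine Finset.sum_eq_single_of_mem j (Finset.mem_univ j) ?_
    intro k _ hkj
    rcases lt_trichotomy (j : ℕ) (k : ℕ) with h | h | h
    · exact hcross j k h
    · exact absurd (Fin.ext h) (Ne.symm hkj)
    · have hc : (fun ω => (A j ω * g (Y j ω)) * (A k ω * g (Y k ω)))
          = fun ω => (A k ω * g (Y k ω)) * (A j ω * g (Y j ω)) := by
        funext ω; ring
      rw [hc]
      exact hcross k j h
  have hdiagbd : ∀ j : Fin N,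
      ∫ ω, (A j ω * g (Y j ω)) * (A j ω * g (Y j ω)) ∂ℙ
        ≤ B ^ 2 * ∫ x, g x ^ 2 ∂(gaussianReal 0 1) := by
    intro j
    have hle : ∀ ω, (A j ω * g (Y j ω)) * (A j ω * g (Y j ω)) ≤ B ^ 2 * g (Y j ω) ^ 2 := by
      intro ω
      have h1 : (A j ω) ^ 2 ≤ B ^ 2 := by
        nlinarith [hA j ω, abs_nonneg (A j ω), le_abs_self (A j ω), neg_abs_le (A j ω)]
      nlinarith [sq_nonneg (g (Y j ω))]
    calc ∫ ω, (A j ω * g (Y j ω)) * (A j ω * g (Y j ω)) ∂ℙ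
        ≤ ∫ ω, B ^ 2 * g (Y j ω) ^ 2 ∂ℙ :=
          integral_mono (hSdiag j) ((hG2int j).const_mul _) hle
      _ = B ^ 2 * ∫ ω, g (Y j ω) ^ 2 ∂ℙ := integral_const_mul _ _
      _ = B ^ 2 * ∫ x, g x ^ 2 ∂(gaussianReal 0 1) := by rw [hG2mean j]
  rw [hexp]
  calc ∑ j, ∑ k, ∫ ω, (A j ω * g (Y j ω)) * (A k ω * g (Y k ω)) ∂ℙ
      = ∑ j : Fin N, ∫ ω, (A j ω * g (Y j ω)) * (A j ω * g (Y j ω)) ∂ℙ :=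
        Finset.sum_congr rfl fun j _ => hrow j
    _ ≤ ∑ _j : Fin N, B ^ 2 * ∫ x, g x ^ 2 ∂(gaussianReal 0 1) :=
        Finset.sum_le_sum fun j _ => hdiagbd j
    _ = (N : ℝ) * (B ^ 2 * ∫ x, g x ^ 2 ∂(gaussianReal 0 1)) := by
        rw [Finset.sum_const, Finset.card_univ, Fintype.card_fin, nsmul_eq_mul]

lemma sum_filter_lt {N : ℕ} (j : ℕ) (w : ℕ → ℝ) :
    ∑ l ∈ Finset.univ.filter (fun l : Fin N => (l : ℕ) < j), w (l : ℕ)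
      = ∑ l ∈ Finset.range (min j N), w l := by
  rw [Finset.sum_filter, Fin.sum_univ_eq_sum_range (fun l => if l < j then w l else 0) N,
    ← Finset.sum_filter]
  congr 1
  ext l
  simp only [Finset.mem_filter, Finset.mem_range, Finset.mem_inter]
  omega

end Helpers

theorem weighted_rank_two_cross_term_L2_rate {Ω : Type*} [MeasureSpace Ω]
    [IsProbabilityMeasure (ℙ : Measure Ω)]
    (X : ℝ → Ω → ℝ) (hX : IsBrownianMotion X)
    (f : ℝ → ℝ) (hf : Differentiable ℝ f) (M : ℝ) (hf' : ∀ x, |deriv f x| ≤ M)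
    (P : Polynomial ℝ) (hP : ∫ x, x * P.eval x ∂(gaussianReal 0 1) = 0)
    (φ : ℕ → ℝ) (K : ℝ) (hφ : ∀ j, |φ j| ≤ K)
    (t : ℝ) (ht : 0 ≤ t) :
    ∃ C : ℝ, ∀ m : ℕ, 1 ≤ m →
      (∫ ω,
        |(2 : ℝ) ^ (-(m : ℝ) / 2) * (1 / 2) *
          ∑ j ∈ Finset.Icc 1 ⌊(2 : ℝ) ^ ((m : ℝ) / 2) * t⌋₊,
            φ j * deriv f (X (((j : ℝ) - 1) * (2 : ℝ) ^ (-(m : ℝ) / 2)) ω) *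
              ((2 : ℝ) ^ ((m : ℝ) / 4) *
                (X ((j : ℝ) * (2 : ℝ) ^ (-(m : ℝ) / 2)) ω -
                  X (((j : ℝ) - 1) * (2 : ℝ) ^ (-(m : ℝ) / 2)) ω)) *
              (P.eval ((2 : ℝ) ^ ((m : ℝ) / 4) *
                  (X ((j : ℝ) * (2 : ℝ) ^ (-(m : ℝ) / 2)) ω -
                    X (((j : ℝ) - 1) * (2 : ℝ) ^ (-(m : ℝ) / 2)) ω)) -
                ∫ y, P.eval y ∂(gaussianReal 0 1))| ^ 2 ∂ℙ)
        ≤ C * (2 : ℝ) ^ (-(m : ℝ) / 2) := by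
  classical
  set μP : ℝ := ∫ y, P.eval y ∂(gaussianReal 0 1) with hμP
  set g : ℝ → ℝ := fun x => x * (P.eval x - μP) with hgdef
  set V : ℝ := ∫ x, g x ^ 2 ∂(gaussianReal 0 1) with hVdef
  have hV0 : 0 ≤ V := integral_nonneg fun x => sq_nonneg _
  have hM : 0 ≤ M := le_trans (abs_nonneg _) (hf' 0)
  have hK : 0 ≤ K := le_trans (abs_nonneg _) (hφ 0)
  -- properties of g
  have hgm : Measurable g := by
    apply Measurable.mul measurable_id
    exact (Polynomial.continuous P).measurable.sub measurable_const
  have hg1 : Integrable g (gaussianReal 0 1) := by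
    have : g = fun x => (Polynomial.X * (P - Polynomial.C μP)).eval x := by
      funext x; simp [hgdef]
    rw [this]; exact integrable_poly_gaussian _
  have hg2 : Integrable (fun x => g x ^ 2) (gaussianReal 0 1) := by
    have : (fun x => g x ^ 2) = fun x => ((Polynomial.X * (P - Polynomial.C μP)) ^ 2).eval x := by
      funext x; simp [hgdef]
    rw [this]; exact integrable_poly_gaussian _
  have hg0 : ∫ x, g x ∂(gaussianReal 0 1) = 0 := by
    have hsplit : g = fun x => x * P.eval x - μP * x := by funext x; simp [hgdef]; ring
    have hint1 : Integrable (fun x : ℝ => x * P.eval x) (gaussianReal 0 1) := by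
      have : (fun x : ℝ => x * P.eval x) = fun x => (Polynomial.X * P).eval x := by
        funext x; simp
      rw [this]; exact integrable_poly_gaussian _
    have hintid : Integrable (fun x : ℝ => x) (gaussianReal 0 1) := by
      simpa using integrable_poly_gaussian Polynomial.X
    have hint2 : Integrable (fun x : ℝ => μP * x) (gaussianReal 0 1) := hintid.const_mul μP
    rw [hsplit, integral_sub hint1 hint2, hP, integral_const_mul, gauss_mean_zero]
    ring
  refine ⟨t * ((K * M) ^ 2 * V) / 4, fun m hm => ?_⟩
  set h : ℝ := (2 : ℝ) ^ (-(m : ℝ) / 2) with hhdef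
  set a : ℝ := (2 : ℝ) ^ ((m : ℝ) / 4) with hadef
  set N : ℕ := ⌊(2 : ℝ) ^ ((m : ℝ) / 2) * t⌋₊ with hNdef
  have hhpos : 0 < h := Real.rpow_pos_of_pos two_pos _
  have hapos : 0 < a := Real.rpow_pos_of_pos two_pos _
  have hah : a ^ 2 * h = 1 := by
    rw [hadef, hhdef, ← Real.rpow_natCast ((2:ℝ) ^ ((m:ℝ)/4)) 2,
      ← Real.rpow_mul (by norm_num : (0:ℝ) ≤ 2), ← Real.rpow_add (by norm_num : (0:ℝ) < 2)]
    rw [show (m:ℝ)/4 * (2:ℕ) + -(m:ℝ)/2 = 0 by push_cast; ring, Real.rpow_zero]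
  have h2h : (2 : ℝ) ^ ((m : ℝ) / 2) * h = 1 := by
    rw [hhdef, ← Real.rpow_add (by norm_num : (0:ℝ) < 2)]
    rw [show (m:ℝ)/2 + -(m:ℝ)/2 = 0 by ring, Real.rpow_zero]
  -- increments
  set D : ℕ → Ω → ℝ := fun i ω => X (((i : ℝ) + 1) * h) ω - X ((i : ℝ) * h) ω with hDdef
  have hDlaw : ∀ i : ℕ, Measure.map (D i) ℙ = gaussianReal 0 h.toNNReal := by
    intro i
    have h1 := hX.2.1 ((i : ℝ) * h) (((i : ℝ) + 1) * h)
      (by positivity) (by nlinarith [hhpos])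
    rw [show ((i : ℝ) + 1) * h - (i : ℝ) * h = h by ring] at h1
    exact h1
  have hDae : ∀ i : ℕ, AEMeasurable (D i) ℙ := by
    intro i
    by_contra hc
    have h0 := Measure.map_of_not_aemeasurable hc
    rw [hDlaw i] at h0
    exact IsProbabilityMeasure.ne_zero _ h0
  set D' : ℕ → Ω → ℝ := fun i => (hDae i).mk (D i) with hD'def
  have hD'm : ∀ i, Measurable (D' i) := fun i => (hDae i).measurable_mk
  have hDD' : ∀ i, D i =ᵐ[ℙ] D' i := fun i => (hDae i).ae_eq_mk
  have hD'law : ∀ i : ℕ, Measure.map (D' i) ℙ = gaussianReal 0 h.toNNReal := by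
    intro i
    rw [← Measure.map_congr (hDD' i)]
    exact hDlaw i
  -- rescaled increments
  have hYm : ∀ i : Fin N, Measurable (fun ω => a * D' (i : ℕ) ω) :=
    fun i => (hD'm i).const_mul a
  have hYlaw : ∀ i : Fin N, Measure.map (fun ω => a * D' (i : ℕ) ω) ℙ = gaussianReal 0 1 := by
    intro i
    have h1 : Measure.map (fun ω => a * D' (i : ℕ) ω) ℙ
        = Measure.map (fun x => a * x) (Measure.map (D' (i : ℕ)) ℙ) :=
      (Measure.map_map (measurable_id.const_mul a) (hD'm i)).symm
    rw [h1, hD'law i, gaussianReal_map_const_mul a]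
    rw [mul_zero]
    congr 1
    ext
    push_cast
    rw [Real.coe_toNNReal _ hhpos.le]
    exact hah
  have hYindep : iIndepFun (fun i : Fin N => fun ω => a * D' (i : ℕ) ω) ℙ := by
    have hu : Monotone (fun n : ℕ => (n : ℝ) * h) := fun x y hxy =>
      mul_le_mul_of_nonneg_right (by exact_mod_cast hxy) hhpos.le
    have hind := hX.2.2 N (fun n : ℕ => (n : ℝ) * h) hu (by simp)
    have heqf : (fun i : Fin N => fun ω =>
        X ((((i : ℕ) + 1 : ℕ) : ℝ) * h) ω - X (((i : ℕ) : ℝ) * h) ω)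
        = fun i : Fin N => D (i : ℕ) := by
      funext i ω
      rw [hDdef]
      norm_num
    rw [heqf] at hind
    have hind' : iIndepFun (fun i : Fin N => D' (i : ℕ)) ℙ :=
      iIndepFun_ae_eq hind (fun i => hDD' (i : ℕ))
    have := hind'.comp (fun _ => fun x => a * x) (fun _ => measurable_id.const_mul a)
    exact this
  -- a.e. identification of grid values
  have hgrid : ∀ᵐ ω ∂(ℙ : Measure Ω), ∀ i : ℕ,
      X ((i : ℝ) * h) ω = ∑ l ∈ Finset.range i, D' l ω := by
    have hae1 : ∀ᵐ ω ∂(ℙ : Measure Ω), ∀ l : ℕ, D l ω = D' l ω :=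
      ae_all_iff.2 fun l => hDD' l
    filter_upwards [hX.1, hae1] with ω h0 hD2
    intro i
    have htel := Finset.sum_range_sub (f := fun l : ℕ => X ((l : ℝ) * h) ω) i
    simp only [Nat.cast_zero, zero_mul, h0, sub_zero] at htel
    rw [← htel]
    refine Finset.sum_congr rfl fun l _ => ?_
    rw [← hD2 l, hDdef]
    rw [show ((l + 1 : ℕ) : ℝ) = (l : ℝ) + 1 by push_cast; ring]
  -- rewrite the integral in terms of the measurable modification
  have hstep1 : (∫ ω,
        |h * (1 / 2) *
          ∑ j ∈ Finset.Icc 1 N,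
            φ j * deriv f (X (((j : ℝ) - 1) * h) ω) *
              (a * (X ((j : ℝ) * h) ω - X (((j : ℝ) - 1) * h) ω)) *
              (Polynomial.eval (a * (X ((j : ℝ) * h) ω - X (((j : ℝ) - 1) * h) ω)) P -
                μP)| ^ 2 ∂ℙ)
      = ∫ ω, (∑ j : Fin N,
          (h * (1 / 2) * φ (1 + (j : ℕ)) * deriv f (∑ l ∈ Finset.range (j : ℕ), D' l ω)) *
            g (a * D' (j : ℕ) ω)) ^ 2 ∂ℙ := by
    refine integral_congr_ae ?_
    filter_upwards [hgrid] with ω hω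
    rw [sq_abs]
    congr 1
    rw [← Finset.Ico_add_one_right_eq_Icc, Finset.sum_Ico_eq_sum_range]
    simp only [Nat.add_sub_cancel]
    rw [Finset.mul_sum]
    refine Eq.trans (Finset.sum_congr rfl fun i _ => ?_)
      (Fin.sum_univ_eq_sum_range (fun i =>
        (h * (1 / 2) * φ (1 + i) * deriv f (∑ l ∈ Finset.range i, D' l ω)) *
          g (a * D' i ω)) N).symm
    have e1 : ((1 + i : ℕ) : ℝ) - 1 = ((i : ℕ) : ℝ) := by push_cast; ring
    rw [e1, hω i, hω (1 + i)]
    have e4 : ∑ l ∈ Finset.range (1 + i), D' l ω - ∑ l ∈ Finset.range i, D' l ω = D' i ω := by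
      rw [add_comm 1 i, Finset.sum_range_succ]; ring
    rw [e4, hgdef]
    ring
  rw [hstep1]
  -- apply the orthogonality estimate
  have hstep2 := key_orthogonality (N := N)
    (fun i : Fin N => fun ω => a * D' (i : ℕ) ω) hYm hYindep hYlaw
    g hgm hg1 hg2 hg0
    (fun j : Fin N => fun ω =>
      h * (1 / 2) * φ (1 + (j : ℕ)) * deriv f (∑ l ∈ Finset.range (j : ℕ), D' l ω))
    (h * (1 / 2) * (K * M))
    (by positivity)
    (by
      intro j ω
      have hc : (0 : ℝ) ≤ h * (1 / 2) := by positivity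
      have habs : |h * (1 / 2) * φ (1 + (j : ℕ)) *
          deriv f (∑ l ∈ Finset.range (j : ℕ), D' l ω)|
          = h * (1 / 2) * |φ (1 + (j : ℕ))| *
            |deriv f (∑ l ∈ Finset.range (j : ℕ), D' l ω)| := by
        rw [abs_mul, abs_mul, abs_of_nonneg hc]
      rw [habs]
      have h1 : h * (1 / 2) * |φ (1 + (j : ℕ))| ≤ h * (1 / 2) * K :=
        mul_le_mul_of_nonneg_left (hφ _) hc
      refine le_trans (mul_le_mul h1 (hf' _) (abs_nonneg _) (mul_nonneg hc hK))
        (le_of_eq (by ring)))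
    (by
      intro j
      refine ⟨fun v : Fin N → ℝ =>
        h * (1 / 2) * φ (1 + (j : ℕ)) * deriv f
          (∑ l ∈ Finset.univ.filter (fun l : Fin N => (l : ℕ) < (j : ℕ)), a⁻¹ * v l), ?_, ?_⟩
      · exact ((measurable_deriv f).comp
          (Finset.measurable_sum _ fun l _ => by fun_prop)).const_mul _
      · intro ω
        have harg : (∑ l ∈ Finset.univ.filter (fun l : Fin N => (l : ℕ) < (j : ℕ)),
            a⁻¹ * (if (l : ℕ) < (j : ℕ) then a * D' (l : ℕ) ω else 0))
            = ∑ l ∈ Finset.range (j : ℕ), D' l ω := by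
          have h1 : (∑ l ∈ Finset.univ.filter (fun l : Fin N => (l : ℕ) < (j : ℕ)),
              a⁻¹ * (if (l : ℕ) < (j : ℕ) then a * D' (l : ℕ) ω else 0))
              = ∑ l ∈ Finset.univ.filter (fun l : Fin N => (l : ℕ) < (j : ℕ)),
                  (fun n : ℕ => D' n ω) (l : ℕ) := by
            refine Finset.sum_congr rfl fun l hl => ?_
            rw [if_pos (Finset.mem_filter.1 hl).2, ← mul_assoc,
              inv_mul_cancel₀ hapos.ne', one_mul]
          rw [h1, sum_filter_lt (j : ℕ) (fun n => D' n ω), min_eq_left j.isLt.le]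
        show h * (1 / 2) * φ (1 + (j : ℕ)) * deriv f (∑ l ∈ Finset.range (j : ℕ), D' l ω)
          = h * (1 / 2) * φ (1 + (j : ℕ)) * deriv f
            (∑ l ∈ Finset.univ.filter (fun l : Fin N => (l : ℕ) < (j : ℕ)),
              a⁻¹ * (if (l : ℕ) < (j : ℕ) then a * D' (l : ℕ) ω else 0))
        rw [harg])
  refine le_trans hstep2 ?_
  -- final arithmetic
  have hNle : (N : ℝ) ≤ (2 : ℝ) ^ ((m : ℝ) / 2) * t :=
    Nat.floor_le (by positivity)
  have hnn : (0 : ℝ) ≤ (h * (1 / 2) * (K * M)) ^ 2 * V := mul_nonneg (sq_nonneg _) hV0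
  calc (N : ℝ) * ((h * (1 / 2) * (K * M)) ^ 2 * ∫ x, g x ^ 2 ∂(gaussianReal 0 1))
      = (N : ℝ) * ((h * (1 / 2) * (K * M)) ^ 2 * V) := by rw [← hVdef]
    _ ≤ ((2 : ℝ) ^ ((m : ℝ) / 2) * t) * ((h * (1 / 2) * (K * M)) ^ 2 * V) :=
        mul_le_mul_of_nonneg_right hNle hnn
    _ = t * ((K * M) ^ 2 * V) / 4 * (((2 : ℝ) ^ ((m : ℝ) / 2) * h) * h) := by ring
    _ = t * ((K * M) ^ 2 * V) / 4 * h := by rw [h2h, one_mul]
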